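/- arXiv:2209.04219 — 3 statements merged into one kernel-verified Lean document; each statement's English description precedes it below -/
import Mathlib

section
/- Lemma (uniform contraction from the tolerance constraint): Let Ω be a symmetric positive definite n×n matrix, and let b, θ > 0 be such that γ(Ω, θ) := (1/2)[tr((I - θΩ⁻¹)⁻¹ - I) + log det(I - θΩ⁻¹)] = b, with I - θΩ⁻¹ positive definite. Then there exists a constant μ > 0, depending only on b and n, such that Ω - θI ≥ μΩ in the Loewner order. -/
noncomputable def gammaRS {n : ℕ} (Ω : Matrix (Fin n) (Fin n) ℝ) (θ : ℝ) : ℝ :=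
  (1 / 2) * (((1 - θ • Ω⁻¹)⁻¹ - 1).trace + Real.log (1 - θ • Ω⁻¹).det)

/-- Scalar lower bound: for `x > 0`, `((√x)⁻¹ - 1)^2 ≤ 1/x - 1 + log x`. -/
lemma aux_f_lower (x : ℝ) (hx : 0 < x) :
    ((Real.sqrt x)⁻¹ - 1) ^ 2 ≤ x⁻¹ - 1 + Real.log x := by
  set s := Real.sqrt x with hs
  have hspos : 0 < s := Real.sqrt_pos.mpr hx
  have hs2 : s ^ 2 = x := Real.sq_sqrt hx.le
  have hinv : (s⁻¹) ^ 2 = x⁻¹ := by rw [← hs2]; rw [inv_pow]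
  have hlog : Real.log x = 2 * Real.log s := by
    rw [← hs2, Real.log_pow]; push_cast; ring
  have hlogs : Real.log s ≥ 1 - s⁻¹ := by
    have := Real.log_le_sub_one_of_pos (inv_pos.mpr hspos)
    rw [Real.log_inv] at this
    linarith
  nlinarith [hinv, hlogs, hlog]

/-- Scalar main lemma: if `1/x - 1 + log x ≤ 2b` then `x ≥ (1 + √(2b+1))⁻² `. -/
lemma aux_scalar (b x : ℝ) (hb : 0 < b) (hx : 0 < x)
    (h : x⁻¹ - 1 + Real.log x ≤ 2 * b) :
    (1 + Real.sqrt (2 * b + 1))⁻¹ ^ 2 ≤ x := by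
  set c := 1 + Real.sqrt (2 * b + 1) with hc
  have hcsq : (c - 1) ^ 2 = 2 * b + 1 := by
    simp only [hc, add_sub_cancel_left]
    rw [Real.sq_sqrt (by linarith)]
  have hc1 : (1 : ℝ) ≤ c := le_add_of_nonneg_right (Real.sqrt_nonneg _)
  set s := Real.sqrt x with hs
  have hspos : 0 < s := Real.sqrt_pos.mpr hx
  have hs2 : s ^ 2 = x := Real.sq_sqrt hx.le
  have hf := aux_f_lower x hx
  have htc : s⁻¹ < c := by
    by_contra hcon
    push_neg at hcon
    nlinarith
  have hsc : c⁻¹ < s := by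
    have h0 : 0 < c := by linarith
    calc c⁻¹ < (s⁻¹)⁻¹ := by
          apply inv_strictAnti₀ (inv_pos.mpr hspos) htc
      _ = s := inv_inv s
  calc c⁻¹ ^ 2 ≤ s ^ 2 := by
        apply pow_le_pow_left₀ (inv_pos.mpr (by linarith : (0:ℝ) < c)).le hsc.le
    _ = x := hs2

set_option maxHeartbeats 1000000 in
theorem stmt_4 (n : ℕ) (b : ℝ) (hb : 0 < b) :
    ∃ μ : ℝ, 0 < μ ∧
      ∀ (Ω : Matrix (Fin n) (Fin n) ℝ) (θ : ℝ), Ω.PosDef → 0 < θ →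
        (1 - θ • Ω⁻¹).PosDef → gammaRS Ω θ = b →
        (Ω - θ • (1 : Matrix (Fin n) (Fin n) ℝ) - μ • Ω).PosSemidef := by
  set c := 1 + Real.sqrt (2 * b + 1) with hc
  have hc1 : (1 : ℝ) ≤ c := le_add_of_nonneg_right (Real.sqrt_nonneg _)
  refine ⟨c⁻¹ ^ 2, by positivity, ?_⟩
  intro Ω θ hΩ hθ hA hγ
  set μ : ℝ := c⁻¹ ^ 2 with hμ
  set A : Matrix (Fin n) (Fin n) ℝ := 1 - θ • Ω⁻¹ with hAdef
  have hAH : A.IsHermitian := hA.1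
  set lam : Fin n → ℝ := hAH.eigenvalues with hlam
  have hlampos : ∀ i, 0 < lam i := fun i => hA.eigenvalues_pos i
  set U : Matrix (Fin n) (Fin n) ℝ := (hAH.eigenvectorUnitary : Matrix (Fin n) (Fin n) ℝ) with hU
  have hU1 : star U * U = 1 := Matrix.mem_unitaryGroup_iff'.mp hAH.eigenvectorUnitary.2
  have hU2 : U * star U = 1 := Matrix.mem_unitaryGroup_iff.mp hAH.eigenvectorUnitary.2
  have hspec : A = U * Matrix.diagonal lam * star U := by
    have := hAH.spectral_theorem
    simpa [RCLike.ofReal_real_eq_id] using this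
  -- inverse of A
  have hAinv : A⁻¹ = U * Matrix.diagonal (fun i => (lam i)⁻¹) * star U := by
    apply Matrix.inv_eq_right_inv
    rw [hspec]
    have : Matrix.diagonal lam * Matrix.diagonal (fun i => (lam i)⁻¹) = 1 := by
      rw [Matrix.diagonal_mul_diagonal]
      have h2 : (fun i => lam i * (lam i)⁻¹) = fun _ : Fin n => (1 : ℝ) :=
        funext fun i => mul_inv_cancel₀ (hlampos i).ne'
      rw [h2, Matrix.diagonal_one]
    calc U * Matrix.diagonal lam * star U * (U * Matrix.diagonal (fun i => (lam i)⁻¹) * star U)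
        = U * Matrix.diagonal lam * (star U * U) * Matrix.diagonal (fun i => (lam i)⁻¹) * star U := by
          noncomm_ring
      _ = U * (Matrix.diagonal lam * Matrix.diagonal (fun i => (lam i)⁻¹)) * star U := by
          rw [hU1]; noncomm_ring
      _ = 1 := by rw [this, mul_one, hU2]
  -- trace of A⁻¹
  have htrace : A⁻¹.trace = ∑ i, (lam i)⁻¹ := by
    rw [hAinv, Matrix.trace_mul_cycle, hU1, one_mul, Matrix.trace_diagonal]
  -- log det
  have hdet : Real.log A.det = ∑ i, Real.log (lam i) := by
    have : A.det = ∏ i, lam i := by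
      have := hAH.det_eq_prod_eigenvalues
      simpa using this
    rw [this]
    rw [Real.log_prod]
    intro i _
    exact (hlampos i).ne'
  -- sum identity
  have hsum : ∑ i, ((lam i)⁻¹ - 1 + Real.log (lam i)) = 2 * b := by
    have h1 : (A⁻¹ - 1).trace = ∑ i, (lam i)⁻¹ - n := by
      rw [Matrix.trace_sub, htrace, Matrix.trace_one]
      simp
    have h2 : gammaRS Ω θ = (1/2) * ((A⁻¹ - 1).trace + Real.log A.det) := rfl
    rw [h2, h1, hdet] at hγ
    rw [Finset.sum_add_distrib, Finset.sum_sub_distrib]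
    simp only [Finset.sum_const, Finset.card_univ, Fintype.card_fin, nsmul_eq_mul, mul_one]
    linarith
  -- each term nonneg, so each ≤ 2b
  have hterm_nonneg : ∀ i, 0 ≤ (lam i)⁻¹ - 1 + Real.log (lam i) := by
    intro i
    have := aux_f_lower (lam i) (hlampos i)
    nlinarith [sq_nonneg ((Real.sqrt (lam i))⁻¹ - 1)]
  have hterm_le : ∀ i, (lam i)⁻¹ - 1 + Real.log (lam i) ≤ 2 * b := by
    intro i
    have := Finset.single_le_sum (f := fun i => (lam i)⁻¹ - 1 + Real.log (lam i))
      (fun j _ => hterm_nonneg j) (Finset.mem_univ i)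
    linarith [hsum ▸ this]
  -- eigenvalue lower bound
  have hlam_ge : ∀ i, μ ≤ lam i := fun i =>
    aux_scalar b (lam i) hb (hlampos i) (hterm_le i)
  -- A - μ • 1 is PosSemidef
  have hAmu : (A - μ • (1 : Matrix (Fin n) (Fin n) ℝ)).PosSemidef := by
    have hdiagpsd : (Matrix.diagonal (fun i => lam i - μ)).PosSemidef :=
      Matrix.posSemidef_diagonal_iff.mpr fun i => sub_nonneg.mpr (hlam_ge i)
    have heq : A - μ • (1 : Matrix (Fin n) (Fin n) ℝ)
        = U * Matrix.diagonal (fun i => lam i - μ) * star U := by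
      have hd : Matrix.diagonal (fun i => lam i - μ)
          = Matrix.diagonal lam - μ • (1 : Matrix (Fin n) (Fin n) ℝ) := by
        ext i j
        by_cases h : i = j <;> simp [h, Matrix.one_apply, Matrix.diagonal_apply]
      rw [hd]
      rw [Matrix.mul_sub, Matrix.sub_mul, ← hspec]
      congr 1
      rw [Matrix.mul_smul, mul_one, Matrix.smul_mul, hU2]
    rw [heq]
    have := hdiagpsd.mul_mul_conjTranspose_same U
    exact this
  -- square root of Ω
  obtain ⟨S, hSS, hSH⟩ : ∃ S : Matrix (Fin n) (Fin n) ℝ, S * S = Ω ∧ S.IsHermitian := by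
    open scoped MatrixOrder in
    exact ⟨CFC.sqrt Ω, CFC.sqrt_mul_sqrt_self Ω (Matrix.PosSemidef.nonneg hΩ.posSemidef),
      Matrix.PosSemidef.isHermitian (Matrix.nonneg_iff_posSemidef.mp (CFC.sqrt_nonneg Ω))⟩
  have hdetS : IsUnit S.det := by
    have h1 : S.det * S.det = Ω.det := by rw [← Matrix.det_mul, hSS]
    have h2 : (0 : ℝ) < Ω.det := hΩ.det_pos
    have : S.det ≠ 0 := by
      intro h; rw [h, mul_zero] at h1; linarith
    exact this.isUnit
  have hSinv1 : S * S⁻¹ = 1 := Matrix.mul_nonsing_inv S hdetS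
  have hSinv2 : S⁻¹ * S = 1 := Matrix.nonsing_inv_mul S hdetS
  have hSΩS : S * Ω⁻¹ * S = 1 := by
    rw [← hSS, Matrix.mul_inv_rev]
    calc S * (S⁻¹ * S⁻¹) * S = (S * S⁻¹) * (S⁻¹ * S) := by noncomm_ring
      _ = 1 := by rw [hSinv1, hSinv2, one_mul]
  -- final congruence
  have hSAS : S * A * S = Ω - θ • (1 : Matrix (Fin n) (Fin n) ℝ) := by
    have h3 : S * (θ • Ω⁻¹) * S = θ • (1 : Matrix (Fin n) (Fin n) ℝ) := by
      rw [Matrix.mul_smul, Matrix.smul_mul, hSΩS]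
    rw [hAdef, Matrix.mul_sub, Matrix.sub_mul, mul_one, hSS, h3]
  have hmu1 : S * (μ • (1 : Matrix (Fin n) (Fin n) ℝ)) * S = μ • Ω := by
    rw [Matrix.mul_smul, mul_one, Matrix.smul_mul, hSS]
  have hfinal : Ω - θ • (1 : Matrix (Fin n) (Fin n) ℝ) - μ • Ω
      = S * (A - μ • (1 : Matrix (Fin n) (Fin n) ℝ)) * S := by
    rw [Matrix.mul_sub, Matrix.sub_mul, hmu1, hSAS]
  rw [hfinal]
  have h2 := hAmu.mul_mul_conjTranspose_same S
  rwa [hSH.eq] at h2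
end

section
/- Let A be an n×n symmetric positive definite matrix with X = A⁻¹ satisfying tr(X) - log det(X) - n = 2b for some b > 0. Then every eigenvalue μ of A satisfies μ ≥ λ̄⁻¹, where λ̄ > 1 is the unique solution of λ̄ - log λ̄ - 1 = 2b. -/
open Matrix in
lemma inv_trace_eq_sum {n : ℕ} (A : Matrix (Fin n) (Fin n) ℝ) (hA : A.PosDef) :
    (A⁻¹).trace = ∑ i, (hA.1.eigenvalues i)⁻¹ := by
  classical
  set U : Matrix (Fin n) (Fin n) ℝ := (hA.1.eigenvectorUnitary : Matrix (Fin n) (Fin n) ℝ)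
  have hU : U * star U = 1 := (Matrix.mem_unitaryGroup_iff).mp hA.1.eigenvectorUnitary.2
  have hU' : star U * U = 1 := (Matrix.mem_unitaryGroup_iff').mp hA.1.eigenvectorUnitary.2
  have hspec : A = U * diagonal (RCLike.ofReal ∘ hA.1.eigenvalues) * star U :=
    hA.1.spectral_theorem
  have hpos : ∀ i, 0 < hA.1.eigenvalues i := hA.eigenvalues_pos
  have hinv : A⁻¹ = U * diagonal (fun i => (hA.1.eigenvalues i)⁻¹) * star U := by
    apply inv_eq_right_inv
    nth_rewrite 1 [hspec]
    have : (diagonal (RCLike.ofReal ∘ hA.1.eigenvalues) : Matrix (Fin n) (Fin n) ℝ) *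
        diagonal (fun i => (hA.1.eigenvalues i)⁻¹) = 1 := by
      rw [diagonal_mul_diagonal]
      convert diagonal_one with i
      exact mul_inv_cancel₀ (ne_of_gt (hpos i))
    simp only [Matrix.mul_assoc]
    rw [← Matrix.mul_assoc (star U) U, hU', one_mul,
      ← Matrix.mul_assoc (diagonal (RCLike.ofReal ∘ hA.1.eigenvalues)), this, one_mul, hU]
  rw [hinv, Matrix.trace_mul_cycle, hU', one_mul, trace_diagonal]

theorem stmt_6 {n : ℕ} (A : Matrix (Fin n) (Fin n) ℝ) (hA : A.PosDef)
    (b lam : ℝ) (hb : 0 < b) (hlam : 1 < lam)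
    (hlameq : lam - Real.log lam - 1 = 2 * b)
    (hX : (A⁻¹).trace - Real.log (A⁻¹).det - n = 2 * b) :
    ∀ k, lam⁻¹ ≤ hA.1.eigenvalues k := by
  classical
  set μ := hA.1.eigenvalues with hμ
  have hpos : ∀ i, 0 < μ i := hA.eigenvalues_pos
  have htr : (A⁻¹).trace = ∑ i, (μ i)⁻¹ := inv_trace_eq_sum A hA
  have hdet : (A⁻¹).det = ∏ i, (μ i)⁻¹ := by
    rw [Matrix.det_nonsing_inv, hA.1.det_eq_prod_eigenvalues]
    simp [Ring.inverse_eq_inv]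
    rfl
  have hlogdet : Real.log (A⁻¹).det = ∑ i, Real.log (μ i)⁻¹ := by
    rw [hdet, Real.log_prod]
    intro i _
    exact ne_of_gt (inv_pos.2 (hpos i))
  -- the sum of nonnegative terms equals 2b
  have hsum : ∑ i, ((μ i)⁻¹ - Real.log (μ i)⁻¹ - 1) = 2 * b := by
    have : ∑ i, ((μ i)⁻¹ - Real.log (μ i)⁻¹ - 1)
        = (∑ i, (μ i)⁻¹) - (∑ i, Real.log (μ i)⁻¹) - n := by
      rw [Finset.sum_sub_distrib, Finset.sum_sub_distrib]
      simp
    rw [this, ← htr, ← hlogdet]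
    exact hX
  have hterm_nonneg : ∀ i, 0 ≤ (μ i)⁻¹ - Real.log (μ i)⁻¹ - 1 := by
    intro i
    have := Real.log_le_sub_one_of_pos (inv_pos.2 (hpos i))
    linarith
  intro k
  have hk_le : (μ k)⁻¹ - Real.log (μ k)⁻¹ - 1 ≤ 2 * b := by
    rw [← hsum]
    exact Finset.single_le_sum (fun i _ => hterm_nonneg i) (Finset.mem_univ k)
  -- show (μ k)⁻¹ ≤ lam
  by_contra h
  push_neg at h
  have hlam0 : (0:ℝ) < lam := lt_trans one_pos hlam
  have hx : lam < (μ k)⁻¹ := by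
    have h2 := (inv_lt_inv₀ (inv_pos.2 hlam0) (hpos k)).2 h
    rwa [inv_inv] at h2
  set x := (μ k)⁻¹ with hxdef
  have hxpos : 0 < x := inv_pos.2 (hpos k)
  have hlog : Real.log x - Real.log lam < x - lam := by
    have h1 : Real.log x - Real.log lam = Real.log (x / lam) := by
      rw [Real.log_div (ne_of_gt hxpos) (ne_of_gt (lt_trans one_pos hlam))]
    have h2 : Real.log (x / lam) ≤ x / lam - 1 :=
      Real.log_le_sub_one_of_pos (div_pos hxpos (lt_trans one_pos hlam))
    have h3 : x / lam - 1 < x - lam := by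
      rw [div_sub_one (ne_of_gt hlam0), div_lt_iff₀ hlam0]
      nlinarith [sub_pos.2 hx]
    linarith
  have : 2 * b < x - Real.log x - 1 := by linarith [hlameq]
  linarith [hk_le]
end

section
/- For a fixed θ > 0, the map Ω ↦ γ(Ω, θ) := (1/2){tr[(I - θΩ⁻¹)⁻¹ - I] + log det(I - θΩ⁻¹)} is monotone decreasing with respect to the Loewner order on the set of symmetric matrices Ω with Ω > θI: if θI < Ω₁ ≤ Ω₂ then γ(Ω₂, θ) ≤ γ(Ω₁, θ). -/
open Matrix

section AuxGamma

variable {n : ℕ}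

open scoped MatrixOrder in
noncomputable def Matrix.PosSemidef.sqrt {A : Matrix (Fin n) (Fin n) ℝ} (_hA : A.PosSemidef) :
    Matrix (Fin n) (Fin n) ℝ := CFC.sqrt A

open scoped MatrixOrder in
lemma Matrix.PosSemidef.sqrt_mul_self {A : Matrix (Fin n) (Fin n) ℝ} (hA : A.PosSemidef) :
    hA.sqrt * hA.sqrt = A := CFC.sqrt_mul_sqrt_self A hA.nonneg

open scoped MatrixOrder in
lemma Matrix.PosSemidef.posSemidef_sqrt {A : Matrix (Fin n) (Fin n) ℝ} (hA : A.PosSemidef) :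
    hA.sqrt.PosSemidef := (CFC.sqrt_nonneg A).posSemidef

private lemma psd_smul' {A : Matrix (Fin n) (Fin n) ℝ} (hA : A.PosSemidef) {c : ℝ} (hc : 0 ≤ c) :
    (c • A).PosSemidef := by
  refine Matrix.PosSemidef.of_dotProduct_mulVec_nonneg ?_ fun x => ?_
  · show (c • A)ᴴ = c • A
    rw [conjTranspose_smul, hA.1.eq]
    simp
  · rw [smul_mulVec, dotProduct_smul, smul_eq_mul]
    exact mul_nonneg hc (hA.dotProduct_mulVec_nonneg x)

private lemma psd_trace_nonneg' {A : Matrix (Fin n) (Fin n) ℝ} (hA : A.PosSemidef) :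
    0 ≤ A.trace := by
  rw [Matrix.trace]
  refine Finset.sum_nonneg fun i _ => ?_
  have := hA.dotProduct_mulVec_nonneg (Pi.single i 1)
  simpa [Matrix.mulVec_single, dotProduct, Pi.single_apply] using this

private lemma trace_mul_psd_nonneg' {P Q : Matrix (Fin n) (Fin n) ℝ} (hP : P.PosSemidef)
    (hQ : Q.PosSemidef) : 0 ≤ (P * Q).trace := by
  have h2 : (hP.sqrt * Q * hP.sqrt).PosSemidef := by
    have := hQ.mul_mul_conjTranspose_same hP.sqrt
    rwa [hP.posSemidef_sqrt.1.eq] at this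
  have h3 : (hP.sqrt * Q * hP.sqrt).trace = (P * Q).trace := by
    rw [trace_mul_comm, ← mul_assoc, hP.sqrt_mul_self]
  exact h3 ▸ psd_trace_nonneg' h2

private lemma transpose_eq_self_of_herm' {M : Matrix (Fin n) (Fin n) ℝ} (h : M.IsHermitian) :
    Mᵀ = M := by
  ext i j
  have := congrFun (congrFun h.eq i) j
  simpa using this

private lemma dot_symm' {M : Matrix (Fin n) (Fin n) ℝ} (h : M.IsHermitian) (y x : Fin n → ℝ) :
    y ⬝ᵥ (M *ᵥ x) = (M *ᵥ y) ⬝ᵥ x := by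
  rw [dotProduct_mulVec, ← Matrix.mulVec_transpose, transpose_eq_self_of_herm' h]

private lemma one_sub_inv_psd' {M : Matrix (Fin n) (Fin n) ℝ} (hM : M.PosDef)
    (h : (M - 1).PosSemidef) : ((1 : Matrix (Fin n) (Fin n) ℝ) - M⁻¹).PosSemidef := by
  have hMinv : M⁻¹.PosDef := hM.inv
  have hdet : IsUnit M.det := (Matrix.isUnit_iff_isUnit_det M).1 hM.isUnit
  refine Matrix.PosSemidef.of_dotProduct_mulVec_nonneg (Matrix.isHermitian_one.sub hMinv.isHermitian) fun x => ?_
  set y := M⁻¹ *ᵥ x with hy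
  have hx : x = M *ᵥ y := by
    rw [hy, mulVec_mulVec, mul_nonsing_inv _ hdet, one_mulVec]
  have hQ : M * M - M = (M - 1) * (M - 1) + (M - 1) := by noncomm_ring
  have hQpsd : (M * M - M).PosSemidef := by
    rw [hQ]
    have h1 : ((M - 1) * (M - 1)).PosSemidef := by
      have := Matrix.posSemidef_conjTranspose_mul_self (M - 1)
      rwa [(hM.isHermitian.sub Matrix.isHermitian_one).eq] at this
    exact h1.add h
  have e1 : x ⬝ᵥ x = y ⬝ᵥ ((M * M) *ᵥ y) := by
    rw [← mulVec_mulVec, dot_symm' hM.isHermitian y (M *ᵥ y), ← hx]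
  have e2 : x ⬝ᵥ y = y ⬝ᵥ (M *ᵥ y) := by
    rw [dotProduct_comm]
    conv_lhs => rw [hx]
  have key : star x ⬝ᵥ ((1 - M⁻¹) *ᵥ x) = star y ⬝ᵥ ((M * M - M) *ᵥ y) := by
    simp only [star_trivial, sub_mulVec, dotProduct_sub, one_mulVec, ← hy]
    rw [e1, e2]
  rw [key]
  exact hQpsd.dotProduct_mulVec_nonneg y

private lemma inv_sub_inv_psd' {B₁ B₂ : Matrix (Fin n) (Fin n) ℝ} (h1 : B₁.PosDef)
    (hle : (B₂ - B₁).PosSemidef) : (B₁⁻¹ - B₂⁻¹).PosSemidef := by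
  set S := h1.posSemidef.sqrt with hSdef
  have hSS : S * S = B₁ := h1.posSemidef.sqrt_mul_self
  have hSh : S.IsHermitian := h1.posSemidef.posSemidef_sqrt.1
  have hSdetu : IsUnit S.det := by
    have hd : S.det * S.det = B₁.det := by rw [← det_mul, hSS]
    have hpos : (0:ℝ) < B₁.det := h1.det_pos
    refine isUnit_iff_ne_zero.2 fun hz => ?_
    rw [hz, mul_zero] at hd
    rw [← hd] at hpos
    exact lt_irrefl _ hpos
  set T := S⁻¹ with hTdef
  have hST : S * T = 1 := mul_nonsing_inv _ hSdetu
  have hTS : T * S = 1 := nonsing_inv_mul _ hSdetu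
  have hTh : T.IsHermitian := by
    show Tᴴ = T
    rw [hTdef, conjTranspose_nonsing_inv, hSh.eq]
  have hTB1T : T * B₁ * T = 1 := by
    rw [← hSS, show T * (S * S) * T = (T * S) * (S * T) by noncomm_ring, hTS, hST, one_mul]
  set M := T * B₂ * T with hMdef
  have hM1 : M - 1 = T * (B₂ - B₁) * T := by
    rw [hMdef, ← hTB1T]; noncomm_ring
  have hM1psd : (M - 1).PosSemidef := by
    rw [hM1]
    have := hle.mul_mul_conjTranspose_same T
    rwa [hTh.eq] at this
  have hMpos : M.PosDef := by
    have : M = (M - 1) + 1 := by abel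
    rw [this]
    exact Matrix.PosDef.posSemidef_add hM1psd Matrix.PosDef.one
  have hB1inv : B₁⁻¹ = T * T := by rw [← hSS, Matrix.mul_inv_rev, hTdef]
  have hMinv : M⁻¹ = S * B₂⁻¹ * S := by
    rw [hMdef, Matrix.mul_inv_rev, Matrix.mul_inv_rev, hTdef,
      nonsing_inv_nonsing_inv _ hSdetu, mul_assoc]
  have hkey : ((1 : Matrix (Fin n) (Fin n) ℝ) - M⁻¹).PosSemidef := one_sub_inv_psd' hMpos hM1psd
  have h1rw : (1 : Matrix (Fin n) (Fin n) ℝ) - M⁻¹ = S * (B₁⁻¹ - B₂⁻¹) * S := by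
    rw [hMinv, hB1inv, mul_sub, sub_mul]
    congr 1
    rw [show S * (T * T) * S = (S * T) * (T * S) by noncomm_ring, hST, hTS, one_mul]
  rw [h1rw] at hkey
  have := hkey.mul_mul_conjTranspose_same T
  rwa [hTh.eq, show T * (S * (B₁⁻¹ - B₂⁻¹) * S) * T
      = (T * S) * (B₁⁻¹ - B₂⁻¹) * (S * T) by noncomm_ring, hTS, hST, one_mul, mul_one] at this

private lemma log_det_one_add_le_trace' {X : Matrix (Fin n) (Fin n) ℝ} (hX : X.PosSemidef) :
    0 < ((1 : Matrix (Fin n) (Fin n) ℝ) + X).det ∧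
      Real.log ((1 : Matrix (Fin n) (Fin n) ℝ) + X).det ≤ X.trace := by
  set U : Matrix (Fin n) (Fin n) ℝ := (hX.1.eigenvectorUnitary : Matrix (Fin n) (Fin n) ℝ)
  have hUU : U * star U = 1 := (Matrix.mem_unitaryGroup_iff).mp hX.1.eigenvectorUnitary.2
  have hUU' : star U * U = 1 := Unitary.coe_star_mul_self hX.1.eigenvectorUnitary
  set d : Fin n → ℝ := hX.1.eigenvalues
  have hd : ∀ i, 0 ≤ d i := hX.eigenvalues_nonneg
  have hspec : X = U * diagonal d * star U := by
    have h := hX.1.spectral_theorem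
    rw [Unitary.conjStarAlgAut_apply] at h
    convert h using 3
    all_goals rfl
  have hone : (1 : Matrix (Fin n) (Fin n) ℝ) + X
      = U * (diagonal (fun i => 1 + d i)) * star U := by
    have : (diagonal (fun i => (1:ℝ) + d i)) = 1 + diagonal d := by
      rw [← diagonal_one, diagonal_add]
    rw [this, hspec]
    rw [mul_add, add_mul, mul_one, hUU]
  have hdet : ((1 : Matrix (Fin n) (Fin n) ℝ) + X).det = ∏ i, (1 + d i) := by
    rw [hone, det_mul, det_mul, mul_comm, ← mul_assoc, ← det_mul, hUU']
    simp [det_diagonal]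
  have htr : X.trace = ∑ i, d i := by
    conv_lhs => rw [hspec]
    rw [trace_mul_cycle, hUU', one_mul, trace_diagonal]
  have hprodpos : (0:ℝ) < ∏ i, (1 + d i) :=
    Finset.prod_pos fun i _ => by linarith [hd i]
  constructor
  · rw [hdet]; exact hprodpos
  · rw [hdet, htr, Real.log_prod (fun i _ => by have := hd i; intro h; linarith)]
    refine Finset.sum_le_sum fun i _ => ?_
    calc Real.log (1 + d i) ≤ 1 + d i - 1 := Real.log_le_sub_one_of_pos (by linarith [hd i])
    _ = d i := by ring

end AuxGamma

private lemma gamma_eq' {n : ℕ} (θ : ℝ) (Ω : Matrix (Fin n) (Fin n) ℝ)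
    (hB : (Ω - θ • (1 : Matrix (Fin n) (Fin n) ℝ)).PosDef) (hΩ : Ω.PosDef) :
    gammaRS Ω θ = 1 / 2 * (θ * (Ω - θ • (1 : Matrix (Fin n) (Fin n) ℝ))⁻¹.trace
      - Real.log ((1 : Matrix (Fin n) (Fin n) ℝ)
          + θ • (Ω - θ • (1 : Matrix (Fin n) (Fin n) ℝ))⁻¹).det) := by
  set B := Ω - θ • (1 : Matrix (Fin n) (Fin n) ℝ) with hBdef
  set A := B⁻¹ with hAdef
  have hdetB : IsUnit B.det := (Matrix.isUnit_iff_isUnit_det B).1 hB.isUnit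
  have hdetΩ : IsUnit Ω.det := (Matrix.isUnit_iff_isUnit_det Ω).1 hΩ.isUnit
  have hBA : B * A = 1 := mul_nonsing_inv _ hdetB
  have hΩeq2 : Ω = B + θ • (1 : Matrix (Fin n) (Fin n) ℝ) := by rw [hBdef]; abel
  have hfac : (1 : Matrix (Fin n) (Fin n) ℝ) - θ • Ω⁻¹ = B * Ω⁻¹ := by
    rw [hBdef, sub_mul, smul_mul, one_mul, mul_nonsing_inv _ hdetΩ]
  have hΩeq : Ω = B * (1 + θ • A) := by
    rw [mul_add, mul_one, mul_smul_comm, hBA, ← hΩeq2]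
  have hinv : ((1 : Matrix (Fin n) (Fin n) ℝ) - θ • Ω⁻¹)⁻¹ = 1 + θ • A := by
    rw [hfac, Matrix.mul_inv_rev, nonsing_inv_nonsing_inv _ hdetΩ]
    conv_lhs => rw [hΩeq2]
    rw [add_mul, smul_mul, one_mul, hBA]
  have htrace : (((1 : Matrix (Fin n) (Fin n) ℝ) - θ • Ω⁻¹)⁻¹ - 1).trace = θ * A.trace := by
    rw [hinv, add_sub_cancel_left, trace_smul, smul_eq_mul]
  have hdet1 : Ω.det = B.det * (1 + θ • A).det := by rw [hΩeq, det_mul]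
  have hdetA1 : (1 + θ • A).det ≠ 0 := by
    intro hz
    rw [hz, mul_zero] at hdet1
    exact hΩ.det_pos.ne' hdet1
  have hdet : ((1 : Matrix (Fin n) (Fin n) ℝ) - θ • Ω⁻¹).det = ((1 + θ • A).det)⁻¹ := by
    rw [hfac, det_mul, Matrix.det_nonsing_inv, Ring.inverse_eq_inv', hdet1]
    field_simp [hB.det_pos.ne']
  rw [gammaRS, htrace, hdet, Real.log_inv]
  ring

theorem stmt_17 {n : ℕ} (θ : ℝ) (hθ : 0 < θ)
    (Ω₁ Ω₂ : Matrix (Fin n) (Fin n) ℝ)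
    (h₁ : (Ω₁ - θ • (1 : Matrix (Fin n) (Fin n) ℝ)).PosDef)
    (h₂ : (Ω₂ - θ • (1 : Matrix (Fin n) (Fin n) ℝ)).PosDef)
    (hΩ₁ : Ω₁.PosDef) (hΩ₂ : Ω₂.PosDef)
    (hle : (Ω₂ - Ω₁).PosSemidef) :
    gammaRS Ω₂ θ ≤ gammaRS Ω₁ θ := by
  set B₁ := Ω₁ - θ • (1 : Matrix (Fin n) (Fin n) ℝ) with hB₁def
  set B₂ := Ω₂ - θ • (1 : Matrix (Fin n) (Fin n) ℝ) with hB₂def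
  set A₁ := B₁⁻¹ with hA₁def
  set A₂ := B₂⁻¹ with hA₂def
  have hA₁pos : A₁.PosDef := h₁.inv
  have hA₂pos : A₂.PosDef := h₂.inv
  have hsub : (B₂ - B₁).PosSemidef := by
    rw [hB₂def, hB₁def, sub_sub_sub_cancel_right]
    exact hle
  have hAle : (A₁ - A₂).PosSemidef := inv_sub_inv_psd' h₁ hsub
  rw [gamma_eq' θ Ω₁ h₁ hΩ₁, gamma_eq' θ Ω₂ h₂ hΩ₂]
  rw [← hB₁def, ← hB₂def, ← hA₁def, ← hA₂def]
  -- C and D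
  set C := (1 : Matrix (Fin n) (Fin n) ℝ) + θ • A₂ with hCdef
  set D := θ • (A₁ - A₂) with hDdef
  have hDpsd : D.PosSemidef := psd_smul' hAle hθ.le
  have hCpos : C.PosDef := by
    have : (θ • A₂ + 1).PosDef :=
      Matrix.PosDef.posSemidef_add (psd_smul' hA₂pos.posSemidef hθ.le) Matrix.PosDef.one
    rwa [add_comm] at this
  have hC1psd : (C - 1).PosSemidef := by
    rw [hCdef, add_sub_cancel_left]
    exact psd_smul' hA₂pos.posSemidef hθ.le
  have hCD : (1 : Matrix (Fin n) (Fin n) ℝ) + θ • A₁ = C + D := by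
    rw [hCdef, hDdef, smul_sub]; abel
  -- square root of C
  set S := hCpos.posSemidef.sqrt with hSdef
  have hSS : S * S = C := hCpos.posSemidef.sqrt_mul_self
  have hSh : S.IsHermitian := hCpos.posSemidef.posSemidef_sqrt.1
  have hSdetu : IsUnit S.det := by
    have hd : S.det * S.det = C.det := by rw [← det_mul, hSS]
    have hpos : (0:ℝ) < C.det := hCpos.det_pos
    refine isUnit_iff_ne_zero.2 fun hz => ?_
    rw [hz, mul_zero] at hd
    rw [← hd] at hpos
    exact lt_irrefl _ hpos
  set T := S⁻¹ with hTdef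
  have hST : S * T = 1 := mul_nonsing_inv _ hSdetu
  have hTS : T * S = 1 := nonsing_inv_mul _ hSdetu
  have hTh : T.IsHermitian := by
    show Tᴴ = T
    rw [hTdef, conjTranspose_nonsing_inv, hSh.eq]
  set X := T * D * T with hXdef
  have hXpsd : X.PosSemidef := by
    have := hDpsd.mul_mul_conjTranspose_same T
    rwa [hTh.eq] at this
  have hCinv : C⁻¹ = T * T := by rw [← hSS, Matrix.mul_inv_rev, hTdef]
  -- determinant factorization
  have hCDS : C + D = S * (1 + X) * S := by
    rw [mul_add, add_mul, mul_one, hSS, hXdef]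
    congr 1
    rw [show S * (T * D * T) * S = (S * T) * D * (T * S) by noncomm_ring, hST, hTS,
      one_mul, mul_one]
  have hdetfac : ((1 : Matrix (Fin n) (Fin n) ℝ) + θ • A₁).det
      = C.det * ((1 : Matrix (Fin n) (Fin n) ℝ) + X).det := by
    rw [hCD, hCDS, det_mul, det_mul]
    rw [show S.det * (1 + X).det * S.det = (S.det * S.det) * (1 + X).det by ring,
      ← det_mul, hSS]
  have hlogX := log_det_one_add_le_trace' hXpsd
  have hlog : Real.log ((1 : Matrix (Fin n) (Fin n) ℝ) + θ • A₁).det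
      = Real.log C.det + Real.log ((1 : Matrix (Fin n) (Fin n) ℝ) + X).det := by
    rw [hdetfac, Real.log_mul hCpos.det_pos.ne' hlogX.1.ne']
  -- trace comparison
  have htrX : X.trace = (C⁻¹ * D).trace := by
    rw [hXdef, trace_mul_cycle, ← hCinv]
  have htrle : X.trace ≤ D.trace := by
    have hkey : (0:ℝ) ≤ (((1 : Matrix (Fin n) (Fin n) ℝ) - C⁻¹) * D).trace :=
      trace_mul_psd_nonneg' (one_sub_inv_psd' hCpos hC1psd) hDpsd
    rw [sub_mul, one_mul, trace_sub] at hkey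
    rw [htrX]
    linarith
  have htrD : D.trace = θ * A₁.trace - θ * A₂.trace := by
    rw [hDdef, trace_smul, trace_sub, smul_eq_mul]
    ring
  have hfinal : Real.log ((1 : Matrix (Fin n) (Fin n) ℝ) + X).det
      ≤ θ * A₁.trace - θ * A₂.trace := by
    calc Real.log ((1 : Matrix (Fin n) (Fin n) ℝ) + X).det ≤ X.trace := hlogX.2
    _ ≤ D.trace := htrle
    _ = θ * A₁.trace - θ * A₂.trace := htrD
  rw [hlog]
  -- it remains to compare ½(θ trA₂ - log det C) ≤ ½(θ trA₁ - (log det C + log det (1+X)))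
  linarith
end
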